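/- arXiv:0911.5703 — 6 statements merged into one kernel-verified Lean document; each statement's English description precedes it below -/
import Mathlib

section
/- Let r be a relation on a finite vertex set V. Every vertex lying on a directed cycle of (V, r) belongs to the grounding kernel; more precisely, if Relation.TransGen r v v holds, then v ∈ Out0^[n](V) for every n, and hence v lies in the grounding kernel K. -/
/-- The sink-removal operator: `Out0 r S` keeps exactly the vertices of `S`
that have a successor inside `S` (i.e. removes the sinks of the subgraph
induced on `S`). -/
def Out0 {V : Type*} (r : V → V → Prop) (S : Set V) : Set V :=
  {v ∈ S | ∃ u ∈ S, r v u}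

lemma cycle_mem_iterate {V : Type*} (r : V → V → Prop) :
    ∀ n : ℕ, ∀ w : V, Relation.TransGen r w w → w ∈ (Out0 r)^[n] (Set.univ : Set V) := by
  intro n
  induction n with
  | zero => intro w _; simp
  | succ n ih =>
    intro w hw
    rw [Function.iterate_succ_apply']
    obtain ⟨u, hwu, huw⟩ := Relation.TransGen.head'_iff.mp hw
    have hu : Relation.TransGen r u u :=
      Relation.TransGen.trans_right huw (Relation.TransGen.single hwu)
    exact ⟨ih w hw, u, ih u hu, hwu⟩

/-- Every vertex lying on a directed cycle belongs to every iterate of `Out0`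
starting from `V`, and hence lies in the grounding kernel `K` (the stable
value of the iteration). -/
theorem cycle_mem_grounding_kernel {V : Type*} [Finite V] (r : V → V → Prop)
    (K : Set V)
    (hK : ∃ ℓ : ℕ, ∀ n : ℕ, n ≥ ℓ → (Out0 r)^[n] (Set.univ : Set V) = K)
    (v : V) (hv : Relation.TransGen r v v) :
    (∀ n : ℕ, v ∈ (Out0 r)^[n] (Set.univ : Set V)) ∧ v ∈ K := by
  obtain ⟨ℓ, hℓ⟩ := hK
  refine ⟨fun n => cycle_mem_iterate r n v hv, ?_⟩
  rw [← hℓ ℓ le_rfl]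
  exact cycle_mem_iterate r ℓ v hv
end

section
/- Let r be a relation on a finite vertex set V and let K be the grounding kernel of (V, r). Then K is a grounding set: the subgraph induced on the complement V \ K is acyclic, i.e., there is no vertex v ∈ V \ K admitting a nonempty directed path from v back to v that uses only vertices of V \ K. -/
lemma Out0_mono {V : Type*} (r : V → V → Prop) {S T : Set V} (h : S ⊆ T) :
    Out0 r S ⊆ Out0 r T := by
  rintro v ⟨hv, u, hu, hr⟩
  exact ⟨h hv, u, h hu, hr⟩

/-- The grounding kernel `K` (stable value of iterating `Out0` from `V`) is a
grounding set: the subgraph induced on the complement of `K` is acyclic, i.e.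
no vertex outside `K` admits a nonempty directed path back to itself that
uses only vertices outside `K`. -/
theorem grounding_kernel_is_grounding_set {V : Type*} [Finite V]
    (r : V → V → Prop) (K : Set V)
    (hK : ∃ ℓ : ℕ, ∀ n : ℕ, n ≥ ℓ → (Out0 r)^[n] (Set.univ : Set V) = K) :
    ∀ v ∉ K, ¬ Relation.TransGen (fun a b => a ∉ K ∧ b ∉ K ∧ r a b) v v := by
  obtain ⟨ℓ, hℓ⟩ := hK
  intro v hv hcyc
  set rel := fun a b => a ∉ K ∧ b ∉ K ∧ r a b with hrel
  set S : Set V := {x | Relation.TransGen rel x v} with hS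
  -- every element of S has an r-successor in S
  have hsub : S ⊆ Out0 r S := by
    intro x hx
    refine Relation.TransGen.head_induction_on hx ?_ ?_
    · intro a h
      exact ⟨Relation.TransGen.single h, v, hcyc, h.2.2⟩
    · intro a c hac hcv _
      exact ⟨Relation.TransGen.head hac hcv, c, hcv, hac.2.2⟩
  -- hence S ⊆ every iterate of Out0 from univ
  have hiter : ∀ n, S ⊆ (Out0 r)^[n] (Set.univ : Set V) := by
    intro n
    induction n with
    | zero => simp
    | succ n ih =>
      rw [Function.iterate_succ_apply']
      exact fun x hx => Out0_mono r ih (hsub hx)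
  have : S ⊆ K := by
    rw [← hℓ ℓ le_rfl]
    exact hiter ℓ
  exact hv (this hcyc)
end

section
/- Let r be a relation on a finite vertex set V and let U ⊆ V be a grounding set that is minimal with respect to inclusion (no proper subset of U is a grounding set). Then every vertex u ∈ U lies on a directed cycle of (V, r), i.e., Relation.TransGen r u u holds. -/
/-- `U` is a grounding set (feedback vertex set) for `r`: the subgraph induced
on the complement of `U` is acyclic, i.e. no vertex outside `U` lies on a
nonempty directed path from itself back to itself using only vertices
outside `U`. -/
def IsGroundingSet {V : Type*} (r : V → V → Prop) (U : Set V) : Prop :=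
  ∀ v ∉ U, ¬ Relation.TransGen (fun a b => a ∉ U ∧ b ∉ U ∧ r a b) v v

/-- Any `s`-path either avoids `u` entirely or passes through `u`. -/
lemma transGen_avoid_or_through {V : Type*} (s : V → V → Prop) (u : V)
    {a b : V} (h : Relation.TransGen s a b) :
    Relation.TransGen (fun x y => s x y ∧ x ≠ u ∧ y ≠ u) a b ∨
      (Relation.ReflTransGen s a u ∧ Relation.ReflTransGen s u b) := by
  induction h with
  | single h =>
      rename_i b
      by_cases ha : a = u
      · exact Or.inr ⟨ha ▸ Relation.ReflTransGen.refl,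
          Relation.ReflTransGen.single (ha ▸ h)⟩
      · by_cases hb : b = u
        · exact Or.inr ⟨Relation.ReflTransGen.single (hb ▸ h),
            hb ▸ Relation.ReflTransGen.refl⟩
        · exact Or.inl (Relation.TransGen.single ⟨h, ha, hb⟩)
  | tail hab hbc ih =>
      rename_i b c
      rcases ih with ih | ⟨h1, h2⟩
      · by_cases hc : c = u
        · refine Or.inr ⟨?_, hc ▸ Relation.ReflTransGen.refl⟩
          have : Relation.ReflTransGen s a b :=
            (Relation.TransGen.mono (fun x y hxy => hxy.1) _ _ ih).to_reflTransGen
          exact hc ▸ this.tail hbc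
        · have hb : b ≠ u := by
            rcases (Relation.transGen_iff _ _ _).1 ih with h | ⟨_, _, h⟩
            · exact h.2.2
            · exact h.2.2
          exact Or.inl (ih.tail ⟨hbc, hb, hc⟩)
      · exact Or.inr ⟨h1, h2.tail hbc⟩

/-- If `U` is a grounding set that is minimal with respect to inclusion (no
proper subset of `U` is a grounding set), then every vertex of `U` lies on a
directed cycle of `(V, r)`. -/
theorem minimal_grounding_set_mem_cycle {V : Type*} [Finite V]
    (r : V → V → Prop) (U : Set V)
    (hU : IsGroundingSet r U)
    (hmin : ∀ U' : Set V, U' ⊂ U → ¬ IsGroundingSet r U') :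
    ∀ u ∈ U, Relation.TransGen r u u := by
  intro u hu
  set U' : Set V := U \ {u} with hU'
  have hss : U' ⊂ U := Set.sdiff_singleton_ssubset.2 hu
  have hnot := hmin U' hss
  simp only [IsGroundingSet, not_forall] at hnot
  obtain ⟨v, hv, hcyc⟩ := hnot
  rw [not_not] at hcyc
  set s : V → V → Prop := fun a b => a ∉ U' ∧ b ∉ U' ∧ r a b with hs
  rcases transGen_avoid_or_through s u hcyc with h | ⟨h1, h2⟩
  · exfalso
    have hvne : v ≠ u := by
      obtain ⟨c, hvc, -⟩ := (Relation.TransGen.head'_iff).1 h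
      exact hvc.2.1
    have hvU : v ∉ U := fun hmem => hv ⟨hmem, hvne⟩
    refine hU v hvU ?_
    refine Relation.TransGen.mono ?_ _ _ h
    rintro x y ⟨⟨hx, hy, hr⟩, hxu, hyu⟩
    exact ⟨fun hm => hx ⟨hm, hxu⟩, fun hm => hy ⟨hm, hyu⟩, hr⟩
  · have h1' : Relation.ReflTransGen r v u := Relation.ReflTransGen.mono (fun x y h => h.2.2) _ _ h1
    have h2' : Relation.ReflTransGen r u v := Relation.ReflTransGen.mono (fun x y h => h.2.2) _ _ h2
    have hcyc' : Relation.TransGen r v v := Relation.TransGen.mono (fun x y h => h.2.2) _ _ hcyc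
    exact (Relation.TransGen.trans_right h2' hcyc').trans_left h1'
end

section
/- Let r be a relation on a finite vertex set V, let K be the grounding kernel of (V, r), and let U ⊆ V be a grounding set of minimum cardinality (a minimum grounding set, MGS). Then U ⊆ K: every minimum grounding set is included in the grounding kernel. -/
/-- Every minimum grounding set (a grounding set of minimum cardinality) is
included in the grounding kernel `K` (the stable value of iterating `Out0`
starting from `V`). -/
theorem minimum_grounding_set_subset_kernel {V : Type*} [Finite V]
    (r : V → V → Prop) (K : Set V)
    (hK : ∃ ℓ : ℕ, ∀ n : ℕ, n ≥ ℓ → (Out0 r)^[n] (Set.univ : Set V) = K)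
    (U : Set V) (hU : IsGroundingSet r U)
    (hmin : ∀ U' : Set V, IsGroundingSet r U' → U.ncard ≤ U'.ncard) :
    U ⊆ K := by
  obtain ⟨ℓ, hℓ⟩ := hK
  have hKeq : (Out0 r)^[ℓ] (Set.univ : Set V) = K := hℓ ℓ le_rfl
  -- S : vertices lying on a cycle of r
  set S : Set V := {v | Relation.TransGen r v v} with hS
  -- S is contained in every iterate of Out0
  have hSiter : ∀ n, S ⊆ (Out0 r)^[n] (Set.univ : Set V) := by
    intro n
    induction n with
    | zero => intro v _; simp
    | succ n ih =>
      intro v hv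
      rw [Function.iterate_succ_apply']
      refine ⟨ih hv, ?_⟩
      obtain ⟨c, hvc, hcv⟩ := Relation.TransGen.head'_iff.mp hv
      have hc : c ∈ S := Relation.TransGen.trans_right hcv (Relation.TransGen.single hvc)
      exact ⟨c, ih hc, hvc⟩
  have hSK : S ⊆ K := hKeq ▸ hSiter ℓ
  set W : Set V := U ∩ K with hW
  -- key lifting lemma
  have key : ∀ x y, Relation.TransGen (fun a b => a ∉ W ∧ b ∉ W ∧ r a b) x y →
      Relation.TransGen (fun a b => a ∉ W ∧ b ∉ W ∧ r a b) y x →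
      Relation.TransGen (fun a b => a ∉ U ∧ b ∉ U ∧ r a b) x y := by
    have rmono : ∀ a b : V, (a ∉ W ∧ b ∉ W ∧ r a b) → r a b := fun a b h => h.2.2
    have notU : ∀ a : V, a ∉ W → a ∈ S → a ∉ U := by
      intro a haW haS haU
      exact haW ⟨haU, hSK haS⟩
    intro x y hxy
    induction hxy using Relation.TransGen.head_induction_on with
    | single h =>
      rename_i x'
      intro hyx
      have hxS : x' ∈ S := (Relation.TransGen.single h.2.2).trans
        (Relation.TransGen.mono rmono _ _ hyx)
      have hyS : y ∈ S := (Relation.TransGen.mono rmono _ _ hyx).trans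
        (Relation.TransGen.single h.2.2)
      exact Relation.TransGen.single ⟨notU _ h.1 hxS, notU _ h.2.1 hyS, h.2.2⟩
    | head hxc hcy IH =>
      rename_i x' c
      intro hyx
      have hcx : Relation.TransGen (fun a b => a ∉ W ∧ b ∉ W ∧ r a b) c x' :=
        hcy.trans hyx
      have hxS : x' ∈ S := (Relation.TransGen.single hxc.2.2).trans
        (Relation.TransGen.mono rmono _ _ hcx)
      have hcS : c ∈ S := (Relation.TransGen.mono rmono _ _ hcx).trans
        (Relation.TransGen.single hxc.2.2)
      have hyc : Relation.TransGen (fun a b => a ∉ W ∧ b ∉ W ∧ r a b) y c :=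
        hyx.trans (Relation.TransGen.single hxc)
      exact Relation.TransGen.head ⟨notU _ hxc.1 hxS, notU _ hxc.2.1 hcS, hxc.2.2⟩
        (IH hyc)
  -- W is a grounding set
  have hWg : IsGroundingSet r W := by
    intro v hvW hcyc
    have hvU : v ∉ U := by
      have hvS : v ∈ S :=
        Relation.TransGen.mono (fun a b (h : a ∉ W ∧ b ∉ W ∧ r a b) => h.2.2) _ _ hcyc
      intro hvU
      exact hvW ⟨hvU, hSK hvS⟩
    exact hU v hvU (key v v hcyc hcyc)
  have hle : U.ncard ≤ W.ncard := hmin W hWg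
  have hWU : W ⊆ U := Set.inter_subset_left
  have : W = U := Set.eq_of_subset_of_ncard_le hWU hle (Set.toFinite U)
  rw [← this]
  exact Set.inter_subset_right
end

section
/- Let r be an acyclic relation on a finite vertex set V (no vertex v satisfies Relation.TransGen r v v). Then the grounding kernel of (V, r) is empty: iterating the sink-removal operator Out0 starting from V stabilizes at the empty set. -/
lemma Out0_chain {V : Type*} (r : V → V → Prop) :
    ∀ n (v : V), v ∈ (Out0 r)^[n] (Set.univ : Set V) →
      ∃ f : ℕ → V, f 0 = v ∧ ∀ i < n, r (f i) (f (i+1)) := by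
  intro n
  induction n with
  | zero => intro v _; exact ⟨fun _ => v, rfl, by omega⟩
  | succ n ih =>
    intro v hv
    rw [Function.iterate_succ'] at hv
    obtain ⟨hvS, u, huS, hru⟩ := hv
    obtain ⟨f, hf0, hf⟩ := ih u huS
    refine ⟨fun i => if i = 0 then v else f (i - 1), by simp, ?_⟩
    intro i hi
    rcases Nat.eq_zero_or_pos i with h | h
    · subst h; simpa [hf0] using hru
    · have h1 : ¬ (i = 0) := by omega
      have h2 : ¬ (i + 1 = 0) := by omega
      simp only [h1, h2, if_false]
      have : i - 1 + 1 = i + 1 - 1 := by omega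
      rw [← this]
      exact hf (i - 1) (by omega)

lemma Out0_empty {V : Type*} (r : V → V → Prop) : Out0 r (∅ : Set V) = ∅ := by
  ext v; simp [Out0]

/-- If `r` is acyclic on a finite vertex set (no vertex lies on a directed
cycle), then the grounding kernel is empty: iterating `Out0` from `V`
stabilizes at the empty set. -/
theorem acyclic_grounding_kernel_empty {V : Type*} [Finite V]
    (r : V → V → Prop) (hacyc : ∀ v : V, ¬ Relation.TransGen r v v) :
    ∃ ℓ : ℕ, ∀ n : ℕ, n ≥ ℓ →
      (Out0 r)^[n] (Set.univ : Set V) = (∅ : Set V) := by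
  set ℓ := Nat.card V with hℓ
  have hbase : (Out0 r)^[ℓ] (Set.univ : Set V) = ∅ := by
    by_contra h
    obtain ⟨v, hv⟩ := Set.nonempty_iff_ne_empty.mpr h
    obtain ⟨f, hf0, hf⟩ := Out0_chain r ℓ v hv
    -- pigeonhole on f restricted to Fin (ℓ+1)
    have : Fintype V := Fintype.ofFinite V
    have hcard : Fintype.card V < Fintype.card (Fin (ℓ + 1)) := by
      simp [hℓ, Nat.card_eq_fintype_card]
    obtain ⟨i, j, hij, heq⟩ :=
      Fintype.exists_ne_map_eq_of_card_lt (fun i : Fin (ℓ + 1) => f i.val) hcard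
    wlog hlt : (i : ℕ) < (j : ℕ) generalizing i j
    · exact this j i hij.symm heq.symm (by omega)
    have hchain : ∀ k, (i : ℕ) < k → k ≤ (j : ℕ) → Relation.TransGen r (f i) (f k) := by
      intro k
      induction k with
      | zero => omega
      | succ k ihk =>
        intro h1 h2
        have hrk : r (f k) (f (k + 1)) := hf k (by omega)
        rcases Nat.lt_or_ge (i : ℕ) k with h | h
        · exact (ihk h (by omega)).tail hrk
        · have : (i : ℕ) = k := by omega
          rw [this]; exact Relation.TransGen.single hrk
    have := hchain j hlt le_rfl
    rw [heq] at this
    exact hacyc _ this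
  refine ⟨ℓ, fun n hn => ?_⟩
  obtain ⟨k, rfl⟩ := Nat.exists_eq_add_of_le hn
  rw [Nat.add_comm, Function.iterate_add_apply, hbase]
  induction k with
  | zero => rfl
  | succ k ihk => rw [Function.iterate_succ_apply, Out0_empty, ihk (by omega)]
end

section
/- Let r be a relation on a finite vertex set V without sources (every vertex has a predecessor), and let K be the grounding kernel of (V, r). Then there exists a unique GK-level function L : V → ℕ such that L v = 0 for all v ∈ K, and for every v ∉ K, L v = 1 + max { L u | r u v } (the maximum of L over the predecessors of v, which form a nonempty finite set). -/
/-- For a relation without sources on a finite vertex set, with grounding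
kernel `K` (the stable value of iterating `Out0` from `V`), there is a unique
GK-level function `L : V → ℕ` with `L v = 0` for `v ∈ K` and
`L v = 1 + max {L u | r u v}` for `v ∉ K` (the maximum, taken over the
nonempty finite set of predecessors of `v`, is expressed with `sSup`). -/
theorem unique_gk_level_function {V : Type*} [Finite V]
    (r : V → V → Prop) (hnosrc : ∀ v : V, ∃ u : V, r u v)
    (K : Set V)
    (hK : ∃ ℓ : ℕ, ∀ n : ℕ, n ≥ ℓ → (Out0 r)^[n] (Set.univ : Set V) = K) :
    ∃! L : V → ℕ,
      (∀ v ∈ K, L v = 0) ∧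
      (∀ v ∉ K, L v = 1 + sSup (L '' {u : V | r u v})) := by
  classical
  obtain ⟨ℓ, hℓ⟩ := hK
  set S : ℕ → Set V := fun n => (Out0 r)^[n] Set.univ with hSdef
  have hSK : S ℓ = K := hℓ ℓ le_rfl
  have hSsucc : ∀ n, S (n + 1) = Out0 r (S n) := by
    intro n; simp [hSdef, Function.iterate_succ_apply']
  set ρ : V → ℕ := fun v => sInf {n | v ∉ S n} with hρdef
  have hne : ∀ v, v ∉ K → ({n | v ∉ S n}).Nonempty := by
    intro v hv; exact ⟨ℓ, by simpa [hSK] using hv⟩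
  have hρ_mem : ∀ v, v ∉ K → v ∉ S (ρ v) := fun v hv => Nat.sInf_mem (hne v hv)
  have hρ_pos : ∀ v, v ∉ K → 0 < ρ v := by
    intro v hv
    rcases Nat.eq_zero_or_pos (ρ v) with h | h
    · exfalso
      have hm := hρ_mem v hv
      rw [h] at hm
      exact hm (by simp [hSdef])
    · exact h
  have hρ_le : ∀ v, v ∉ K → ρ v ≤ ℓ := by
    intro v hv
    exact Nat.sInf_le (by simpa [hSK] using hv)
  have hρ_prev : ∀ v, v ∉ K → v ∈ S (ρ v - 1) := by
    intro v hv
    by_contra h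
    have h1 : ρ v ≤ ρ v - 1 := Nat.sInf_le h
    have := hρ_pos v hv
    omega
  have key : ∀ v, v ∉ K → ∀ u, u ∉ K → r u v → ρ v < ρ u := by
    intro v hv u hu hr
    have h1 : u ∈ S (ρ u - 1) := hρ_prev u hu
    have h2 : u ∉ S (ρ u) := hρ_mem u hu
    have h3 : v ∉ S (ρ u - 1) := by
      intro hvS
      apply h2
      have heq : S (ρ u) = Out0 r (S (ρ u - 1)) := by
        have h4 := hSsucc (ρ u - 1)
        rw [Nat.sub_add_cancel (hρ_pos u hu)] at h4
        exact h4
      rw [heq]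
      exact ⟨h1, v, hvS, hr⟩
    have h5 : ρ v ≤ ρ u - 1 := Nat.sInf_le h3
    have := hρ_pos u hu
    omega
  -- iterate the functional
  let g : ℕ → V → ℕ := fun n =>
    Nat.rec (fun _ => 0)
      (fun _ gn v => if v ∈ K then 0 else 1 + sSup (gn '' {u | r u v})) n
  have hgsucc : ∀ n v,
      g (n + 1) v = if v ∈ K then 0 else 1 + sSup (g n '' {u | r u v}) :=
    fun _ _ => rfl
  have hgK : ∀ n v, v ∈ K → g n v = 0 := by
    intro n v hv
    cases n with
    | zero => rfl
    | succ n => rw [hgsucc]; simp [hv]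
  have hstab : ∀ k, ∀ v, v ∉ K → ℓ - ρ v < k → ∀ n, k ≤ n → g n v = g k v := by
    intro k
    induction k using Nat.strong_induction_on with
    | _ k ih =>
      intro v hv hk n hn
      induction n, hn using Nat.le_induction with
      | base => rfl
      | succ n hn ihn =>
        rw [← ihn]
        obtain ⟨m, rfl⟩ : ∃ m, n = m + 1 := ⟨n - 1, by omega⟩
        rw [hgsucc (m + 1) v, hgsucc m v, if_neg hv, if_neg hv]
        congr 1
        congr 1
        apply Set.image_congr
        intro u hu
        by_cases huK : u ∈ K
        · rw [hgK (m + 1) u huK, hgK m u huK]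
        · have hlt : ℓ - ρ u < ℓ - ρ v := by
            have h6 := key v hv u huK hu
            have h7 := hρ_le u huK
            omega
          rw [ih (ℓ - ρ u + 1) (by omega) u huK (by omega) (m + 1) (by omega),
              ih (ℓ - ρ u + 1) (by omega) u huK (by omega) m (by omega)]
  have hLK : ∀ v ∈ K, g ℓ v = 0 := fun v hv => hgK ℓ v hv
  have hLrec : ∀ v ∉ K, g ℓ v = 1 + sSup (g ℓ '' {u | r u v}) := by
    intro v hv
    have h1 := hρ_pos v hv
    have h2 := hρ_le v hv
    calc g ℓ v = g (ℓ - ρ v + 1) v := hstab (ℓ - ρ v + 1) v hv (by omega) ℓ (by omega)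
      _ = g (ℓ + 1) v := (hstab (ℓ - ρ v + 1) v hv (by omega) (ℓ + 1) (by omega)).symm
      _ = 1 + sSup (g ℓ '' {u | r u v}) := by rw [hgsucc, if_neg hv]
  refine ⟨g ℓ, ⟨hLK, hLrec⟩, ?_⟩
  rintro L' ⟨h1, h2⟩
  have huniq : ∀ k v, v ∉ K → ℓ - ρ v < k → L' v = g ℓ v := by
    intro k
    induction k using Nat.strong_induction_on with
    | _ k ih =>
      intro v hv hk
      rw [h2 v hv, hLrec v hv]
      congr 1
      congr 1
      apply Set.image_congr
      intro u hu
      by_cases huK : u ∈ K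
      · rw [h1 u huK, hgK ℓ u huK]
      · have hlt : ℓ - ρ u < ℓ - ρ v := by
          have h6 := key v hv u huK hu
          have h7 := hρ_le u huK
          omega
        exact ih (ℓ - ρ u + 1) (by omega) u huK (by omega)
  funext v
  by_cases hv : v ∈ K
  · rw [h1 v hv, hgK ℓ v hv]
  · exact huniq (ℓ - ρ v + 1) v hv (by omega)
end
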